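/- If X is a nonnegative random variable with E[X^{1/n}] < ∞ for some positive integer n, and X_1,...,X_N are iid copies of X with N ≥ n, then E[min{X_1,...,X_N}] ≤ (E[X^{1/n}])^n. -/

import Mathlib

open MeasureTheory ProbabilityTheory

lemma aux_prod_integral {Ω ι : Type*} [MeasurableSpace Ω] {P : Measure Ω}
    [IsProbabilityMeasure P] {Z : ι → Ω → ℝ} (hmeas : ∀ i, Measurable (Z i))
    (hindep : iIndepFun Z P)
    (hint : ∀ i, Integrable (Z i) P) (s : Finset ι) :
    Integrable (∏ i ∈ s, Z i) P ∧
      ∫ ω, (∏ i ∈ s, Z i) ω ∂P = ∏ i ∈ s, ∫ ω, Z i ω ∂P := by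
  classical
  induction s using Finset.induction_on with
  | empty =>
    refine ⟨?_, by simp⟩
    exact integrable_const (1:ℝ)
  | insert _ _ hi ih =>
    rename_i a s
    have hI : IndepFun (∏ j ∈ s, Z j) (Z a) P :=
      hindep.indepFun_finsetProd_of_notMem hmeas hi
    have hInt : Integrable (∏ j ∈ s, Z j) P := ih.1
    rw [Finset.prod_insert hi, Finset.prod_insert hi]
    constructor
    · exact (hI.symm.integrable_mul (hint a) hInt)
    · have := hI.integral_mul_eq_mul_integral hInt.aestronglyMeasurable (hint a).aestronglyMeasurable
      calc ∫ ω, (Z a * ∏ j ∈ s, Z j) ω ∂P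
          = ∫ ω, ((∏ j ∈ s, Z j) * Z a) ω ∂P := by
            congr 1; ext ω; simp [mul_comm]
        _ = (∫ ω, (∏ j ∈ s, Z j) ω ∂P) * ∫ ω, Z a ω ∂P := this
        _ = (∫ ω, Z a ω ∂P) * ∏ j ∈ s, ∫ ω, Z j ω ∂P := by rw [ih.2, mul_comm]

theorem integral_min_le_pow_integral_rpow
    {Ω : Type*} [MeasurableSpace Ω] (P : Measure Ω) [IsProbabilityMeasure P]
    (X : Ω → ℝ) (hXmeas : Measurable X) (hXnonneg : ∀ ω, 0 ≤ X ω)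
    (n : ℕ) (hn : 1 ≤ n)
    (hint : Integrable (fun ω => X ω ^ ((n : ℝ)⁻¹)) P)
    (N : ℕ) (hNn : n ≤ N)
    (Y : Fin N → Ω → ℝ)
    (hYmeas : ∀ i, Measurable (Y i))
    (hindep : iIndepFun Y P)
    (hident : ∀ i, IdentDistrib (Y i) X P P) :
    ∫ ω, (⨅ i, Y i ω) ∂P ≤ (∫ ω, X ω ^ ((n : ℝ)⁻¹) ∂P) ^ n := by
  classical
  have hN : 0 < N := lt_of_lt_of_le hn hNn
  haveI : NeZero N := ⟨hN.ne'⟩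
  have hnR : ((n : ℝ))⁻¹ * (n : ℝ) = 1 := by
    field_simp
  -- the transformed variables
  set Z : Fin N → Ω → ℝ := fun i ω => Y i ω ^ ((n : ℝ)⁻¹) with hZ
  have hrpow : Measurable fun x : ℝ => x ^ ((n : ℝ)⁻¹) :=
    (Real.continuous_rpow_const (by positivity)).measurable
  have hZmeas : ∀ i, Measurable (Z i) := fun i => hrpow.comp (hYmeas i)
  have hZident : ∀ i, IdentDistrib (Z i) (fun ω => X ω ^ ((n : ℝ)⁻¹)) P P :=
    fun i => (hident i).comp hrpow
  have hZint : ∀ i, Integrable (Z i) P := fun i => ((hZident i).integrable_iff).2 hint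
  have hZindep : iIndepFun Z P :=
    hindep.comp _ (fun _ => hrpow)
  have hZeq : ∀ i, ∫ ω, Z i ω ∂P = ∫ ω, X ω ^ ((n : ℝ)⁻¹) ∂P :=
    fun i => (hZident i).integral_eq
  -- the finset of the first n indices
  set s : Finset (Fin N) :=
    (Finset.range n).attachFin (fun m hm => lt_of_lt_of_le (Finset.mem_range.mp hm) hNn)
    with hs
  have hcard : s.card = n := by
    rw [hs, Finset.card_attachFin, Finset.card_range]
  -- a.e. nonnegativity of Y i
  have hYnn : ∀ᵐ ω ∂P, ∀ i, 0 ≤ Y i ω := by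
    rw [ae_all_iff]
    intro i
    have h1 : P {ω | Y i ω ∈ Set.Ici (0:ℝ)} = P {ω | X ω ∈ Set.Ici (0:ℝ)} :=
      (hident i).measure_mem_eq measurableSet_Ici
    have h2 : {ω | X ω ∈ Set.Ici (0:ℝ)} = Set.univ := by
      ext ω; simp [hXnonneg ω]
    have : P {ω | Y i ω ∈ Set.Ici (0:ℝ)} = 1 := by rw [h1, h2]; simp
    have := prob_compl_eq_zero_iff (by
      exact (hYmeas i) measurableSet_Ici) |>.2 this
    filter_upwards [measure_eq_zero_iff_ae_notMem.1 this] with ω hω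
    simpa using hω
  -- a.e. pointwise bound
  have hbound : ∀ᵐ ω ∂P, (⨅ i, Y i ω) ≤ (∏ i ∈ s, Z i) ω := by
    filter_upwards [hYnn] with ω hω
    set m := ⨅ i, Y i ω with hm
    have hmnn : 0 ≤ m := le_ciInf hω
    have hmle : ∀ i, m ≤ Y i ω := fun i => ciInf_le (Finite.bddBelow_range _) i
    have key : ∏ i ∈ s, (m ^ ((n : ℝ)⁻¹)) ≤ ∏ i ∈ s, Z i ω := by
      apply Finset.prod_le_prod
      · intro i _; positivity
      · intro i _
        exact Real.rpow_le_rpow hmnn (hmle i) (by positivity)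
    have heq : ∏ i ∈ s, (m ^ ((n : ℝ)⁻¹)) = m := by
      rw [Finset.prod_const, hcard, ← Real.rpow_natCast (m ^ ((n:ℝ)⁻¹)) n,
        ← Real.rpow_mul hmnn, hnR, Real.rpow_one]
    calc m = ∏ i ∈ s, (m ^ ((n : ℝ)⁻¹)) := heq.symm
      _ ≤ ∏ i ∈ s, Z i ω := key
      _ = (∏ i ∈ s, Z i) ω := by simp
  obtain ⟨hprodint, hprodeq⟩ := aux_prod_integral hZmeas hZindep hZint s
  -- integrability of the infimum
  have hinfmeas : Measurable fun ω => ⨅ i, Y i ω := Measurable.iInf hYmeas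
  have hinfint : Integrable (fun ω => ⨅ i, Y i ω) P := by
    apply Integrable.mono' hprodint hinfmeas.aestronglyMeasurable
    filter_upwards [hbound, hYnn] with ω h1 h2
    rw [Real.norm_eq_abs, abs_of_nonneg (le_ciInf h2)]
    exact h1
  calc ∫ ω, (⨅ i, Y i ω) ∂P ≤ ∫ ω, (∏ i ∈ s, Z i) ω ∂P :=
        integral_mono_ae hinfint hprodint hbound
    _ = ∏ i ∈ s, ∫ ω, Z i ω ∂P := hprodeq
    _ = (∫ ω, X ω ^ ((n : ℝ)⁻¹) ∂P) ^ n := by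
        rw [Finset.prod_congr rfl (fun i _ => hZeq i), Finset.prod_const, hcard]
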